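/- On a torsion-free p-complete λ-ring R whose Adams operations ψ^k (k prime to p) are all the identity, the λ-operations applied to an element x with ψ^p(x) = x are given by λ^n(x) = C(x, n) (the binomial coefficient); in particular in the λ-ring ℤ_p with all Adams operations the identity, λ^n(x) = C(x,n) for all x ∈ ℤ_p. -/

import Mathlib

/-- Let `R` be a `p`-torsion-free (`p`-complete) commutative `ℤ_p`-algebra with λ-operations
`lam n`, and let `x ∈ R` be an element on which all Adams operations are the identity: via
Newton's relations (which determine the Adams operations from the λ-operations), this means
`∑_{i=0}^{n-1} (−1)^i λ^i(x)·x + (−1)^n n λ^n(x) = 0` for all `n ≥ 1`.  Then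
`λ^n(x) = C(x, n)`, the binomial coefficient, i.e. `n! · λ^n(x) = x(x−1)⋯(x−n+1)`.
In particular, in the λ-ring `ℤ_p` with all Adams operations the identity (take `R = ℤ_p`),
`λ^n(x) = C(x, n)` for all `x ∈ ℤ_p`. -/
theorem stmt_17 (p : ℕ) [Fact p.Prime] (R : Type) [CommRing R] [Algebra ℤ_[p] R]
    (htf : ∀ y : R, (p : R) * y = 0 → y = 0)
    (lam : ℕ → R → R)
    (h0 : ∀ y : R, lam 0 y = 1)
    (h1 : ∀ y : R, lam 1 y = y)
    (hone : ∀ n : ℕ, 2 ≤ n → lam n 1 = 0)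
    (hadd : ∀ (y z : R) (n : ℕ),
      lam n (y + z) = ∑ i ∈ Finset.range (n + 1), lam i y * lam (n - i) z)
    (x : R)
    (hNewton : ∀ n : ℕ, 1 ≤ n →
      (∑ i ∈ Finset.range n, (-1 : R) ^ i * lam i x * x) + (-1 : R) ^ n * n * lam n x = 0) :
    ∀ n : ℕ, (n.factorial : R) * lam n x = ∏ i ∈ Finset.range n, (x - (i : R)) := by
  have hrec : ∀ n : ℕ, ((n : R) + 1) * lam (n + 1) x = lam n x * (x - (n : R)) := by
    intro n
    cases n with
    | zero =>
      have h := hNewton 1 le_rfl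
      simp [h0, h1] at h ⊢
    | succ m =>
      have hA := hNewton (m + 2) (by omega)
      have hB := hNewton (m + 1) (by omega)
      rw [Finset.sum_range_succ] at hA
      have hs : (-1 : R) ^ m = 1 ∨ (-1 : R) ^ m = -1 := neg_one_pow_eq_or R m
      simp only [pow_succ] at hA hB
      push_cast at hA hB ⊢
      rcases hs with hs | hs <;> rw [hs] at hA hB
      · linear_combination hA - hB
      · linear_combination hB - hA
  intro n
  induction n with
  | zero => simp [h0]
  | succ m ih =>
    rw [Finset.prod_range_succ, ← ih]
    have h := hrec m
    push_cast [Nat.factorial_succ]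
    linear_combination (m.factorial : R) * h
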